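/- Let D be an integral domain with quotient field K, let p ∈ D[X] be monic of degree n, and let f(X) = g(X)/d ∈ K[X] with g ∈ D[X] and d ∈ D nonzero. Then f ∈ Int(M_n^p(D)) (i.e., f(M) has entries in D for every n×n matrix M over D with characteristic polynomial p) if and only if g(X) is divisible by p(X) modulo dD[X], i.e., g ∈ (p(X)) + dD[X]. -/

import Mathlib

open Polynomial

/-- The minimal polynomial of `AdjoinRoot.root p` over a nontrivial commutative ring
is `p` itself, when `p` is monic. -/
lemma minpoly_adjoinRoot_root {D : Type*} [CommRing D] [IsDomain D] {p : Polynomial D}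
    (hp : p.Monic) : minpoly D (AdjoinRoot.root p) = p := by
  refine (minpoly.unique' D _ hp ?_ ?_).symm
  · rw [AdjoinRoot.aeval_eq, AdjoinRoot.mk_self]
  · intro q hq
    rcases eq_or_ne q 0 with h | h
    · exact Or.inl h
    refine Or.inr fun hq0 => ?_
    rw [AdjoinRoot.aeval_eq, AdjoinRoot.mk_eq_zero] at hq0
    exact absurd (Polynomial.degree_le_of_dvd hq0 h) (not_le.mpr hq)

/-- Let `D` be an integral domain with quotient field `K`, let `p ∈ D[X]`
be monic of degree `n`, and let `f = g/d ∈ K[X]` with `g ∈ D[X]` and `d ∈ D` nonzero.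
Then `f ∈ Int(M_n^p(D))`, i.e. `f(M)` has all entries in `D` for every `n × n` matrix `M`
over `D` with characteristic polynomial `p`, if and only if `g` is divisible by `p`
modulo `dD[X]`, i.e. `g ∈ (p) + dD[X]` (the ideal of `D[X]` generated by `p` and `d`). -/
theorem stmt_3 (D : Type*) [CommRing D] [IsDomain D] (K : Type*) [Field K]
    [Algebra D K] [IsFractionRing D K] (n : ℕ) (p : Polynomial D)
    (hmonic : p.Monic) (hdeg : p.natDegree = n)
    (g : Polynomial D) (d : D) (hd : d ≠ 0) :
    (∀ M : Matrix (Fin n) (Fin n) D, M.charpoly = p → ∀ i j : Fin n,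
        (Polynomial.aeval (M.map (algebraMap D K))
          (Polynomial.C ((algebraMap D K d)⁻¹) * g.map (algebraMap D K))) i j
          ∈ (algebraMap D K).range) ↔
      g ∈ Ideal.span ({p, Polynomial.C d} : Set (Polynomial D)) := by
  subst hdeg
  set n := p.natDegree with hn
  set φ := algebraMap D K with hφ
  have hφinj : Function.Injective φ := IsFractionRing.injective D K
  have hφd : φ d ≠ 0 := fun h => hd (hφinj (h.trans (map_zero φ).symm))
  -- the `D`-algebra hom mapping matrices over `D` to matrices over `K`
  set Φ : Matrix (Fin n) (Fin n) D →ₐ[D] Matrix (Fin n) (Fin n) K :=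
    AlgHom.mapMatrix (Algebra.ofId D K) with hΦ
  have hΦapp : ∀ M : Matrix (Fin n) (Fin n) D, Φ M = M.map φ := fun M => rfl
  -- key entrywise formula
  have key : ∀ (M : Matrix (Fin n) (Fin n) D) (i j : Fin n),
      (Polynomial.aeval (M.map φ) (Polynomial.C ((φ d)⁻¹) * g.map φ)) i j
        = (φ d)⁻¹ * φ ((Polynomial.aeval M g) i j) := by
    intro M i j
    rw [map_mul, Polynomial.aeval_C, Polynomial.aeval_map_algebraMap, ← hΦapp,
      Polynomial.aeval_algHom_apply, ← Algebra.smul_def, Matrix.smul_apply, smul_eq_mul]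
    rfl
  constructor
  · -- forward direction: use the companion matrix
    intro h
    set b := AdjoinRoot.powerBasis' hmonic with hb
    set Cm : Matrix (Fin n) (Fin n) D := Algebra.leftMulMatrix b.basis b.gen with hCm
    have hC : Cm.charpoly = p := by
      refine (charpoly_leftMulMatrix b).trans ?_
      exact minpoly_adjoinRoot_root hmonic
    set r := g %ₘ p with hr
    have haevalg : Polynomial.aeval Cm g = Polynomial.aeval Cm r := by
      conv_lhs => rw [← Polynomial.modByMonic_add_div g p]
      rw [map_add, map_mul]
      have h0 : Polynomial.aeval Cm p = 0 := by rw [← hC]; exact Matrix.aeval_self_charpoly Cm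
      rw [h0, zero_mul, add_zero]
    -- entries of `aeval Cm r` in the first column are the coefficients of `r`
    have hentry : ∀ i : Fin n, (Polynomial.aeval Cm r) i ⟨0, i.pos⟩ = r.coeff i := by
      intro i
      have hAM : Polynomial.aeval Cm r
          = Algebra.leftMulMatrix b.basis (Polynomial.aeval b.gen r) :=
        Polynomial.aeval_algHom_apply (Algebra.leftMulMatrix b.basis) b.gen r
      rw [hAM]
      erw [Algebra.leftMulMatrix_eq_repr_mul]
      have hb0 : b.basis ⟨0, i.pos⟩ = 1 := by
        rw [b.coe_basis]
        simp
      erw [hb0, mul_one]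
      have hg1 : Polynomial.aeval b.gen r = AdjoinRoot.mk p r := by
        rw [hb, AdjoinRoot.powerBasis'_gen, AdjoinRoot.aeval_eq]
      rw [hg1]
      have hrepr : (b.basis.repr (AdjoinRoot.mk p r)) i = (r %ₘ p).coeff i :=
        AdjoinRoot.powerBasisAux'_repr_apply_to_fun hmonic (AdjoinRoot.mk p r) i
      rw [hrepr, hr, (Polynomial.modByMonic_eq_self_iff hmonic).mpr
        (Polynomial.degree_modByMonic_lt g hmonic)]
    have hdvd : ∀ i : ℕ, d ∣ r.coeff i := by
      intro i
      by_cases hi : i < n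
      · obtain ⟨c, hc⟩ := h Cm hC ⟨i, hi⟩ ⟨0, (⟨i, hi⟩ : Fin n).pos⟩
        rw [key, haevalg, hentry ⟨i, hi⟩] at hc
        refine ⟨c, hφinj ?_⟩
        rw [map_mul, hc, ← mul_assoc, mul_inv_cancel₀ hφd, one_mul]
      · have hz : r.coeff i = 0 := by
          refine Polynomial.coeff_eq_zero_of_degree_lt
            (lt_of_lt_of_le (Polynomial.degree_modByMonic_lt g hmonic) ?_)
          rw [Polynomial.degree_eq_natDegree hmonic.ne_zero]
          exact_mod_cast not_lt.mp hi
        simp [hz]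
    obtain ⟨s, hs⟩ := (Polynomial.C_dvd_iff_dvd_coeff d r).mpr hdvd
    refine Ideal.mem_span_pair.mpr ⟨g /ₘ p, s, ?_⟩
    rw [mul_comm (g /ₘ p) p, mul_comm s (Polynomial.C d), ← hs, add_comm]
    exact Polynomial.modByMonic_add_div g p
  · -- reverse direction
    intro hg M hM i j
    obtain ⟨a, b, hab⟩ := Ideal.mem_span_pair.mp hg
    have hMp : Polynomial.aeval M p = 0 := by rw [← hM]; exact Matrix.aeval_self_charpoly M
    have hev : Polynomial.aeval M g = d • Polynomial.aeval M b := by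
      rw [← hab, map_add, map_mul, map_mul, hMp, mul_zero, zero_add, Polynomial.aeval_C,
        Algebra.algebraMap_eq_smul_one, mul_smul_comm, mul_one]
    refine ⟨(Polynomial.aeval M b) i j, ?_⟩
    rw [key, hev, Matrix.smul_apply, smul_eq_mul, map_mul, ← mul_assoc,
      inv_mul_cancel₀ hφd, one_mul]
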